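/- Every finite brace whose order (cardinality) is square-free is supersoluble. -/

import Mathlib

/-- A (skew left) brace: a set with an additive group structure (not necessarily abelian)
and a multiplicative group structure sharing the same identity, satisfying the skew
distributive law `a * (b + c) = a * b + -a + a * c`. -/
class SkewBrace (B : Type*) extends AddGroup B, Group B where
  one_eq_zero : (1 : B) = (0 : B)
  skew_distrib : ∀ a b c : B, a * (b + c) = a * b + -a + a * c

/-- A group is supersoluble if it has a finite chain of normal subgroups with all
factors cyclic. -/
def Group.IsSupersoluble (G : Type*) [Group G] : Prop :=
  ∃ (n : ℕ) (H : ℕ → Subgroup G),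
    H 0 = ⊥ ∧ H n = ⊤ ∧ (∀ i, (H i).Normal) ∧ (∀ i, i < n → H i ≤ H (i + 1)) ∧
    ∀ i, i < n → ∃ x ∈ H (i + 1), ∀ y ∈ H (i + 1), ∃ k : ℤ, (x ^ k)⁻¹ * y ∈ H i

namespace SkewBrace

variable {B : Type*} [SkewBrace B]

/-- `lam a b = -a + a * b`, i.e. `λ_a(b)`. -/
def lam (a b : B) : B := -a + a * b

/-- the star operation `a ∗ b = λ_a(b) - b`. -/
def starOp (a b : B) : B := lam a b + -b

/-- the additive commutator `[a,b]_+`. -/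
def addCommutator (a b : B) : B := -a + -b + a + b

/-- A subbrace of `B`: a subset that is a subgroup of both `(B,+)` and `(B,·)`. -/
structure Subbrace (B : Type*) [SkewBrace B] where
  carrier : Set B
  zero_mem : (0 : B) ∈ carrier
  add_mem : ∀ {a b : B}, a ∈ carrier → b ∈ carrier → a + b ∈ carrier
  neg_mem : ∀ {a : B}, a ∈ carrier → -a ∈ carrier
  mul_mem : ∀ {a b : B}, a ∈ carrier → b ∈ carrier → a * b ∈ carrier
  inv_mem : ∀ {a : B}, a ∈ carrier → a⁻¹ ∈ carrier

/-- An ideal of `B`: a subbrace that is normal in `(B,+)` and in `(B,·)` and is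
invariant under all the maps `λ_b`. -/
structure BraceIdeal (B : Type*) [SkewBrace B] extends Subbrace B where
  addConj_mem : ∀ (b : B) {a : B}, a ∈ carrier → b + a + -b ∈ carrier
  mulConj_mem : ∀ (b : B) {a : B}, a ∈ carrier → b * a * b⁻¹ ∈ carrier
  lam_mem : ∀ (b : B) {a : B}, a ∈ carrier → lam b a ∈ carrier

/-- The additive subgroup underlying a subbrace. -/
def Subbrace.addSubgroup (S : Subbrace B) : AddSubgroup B where
  carrier := S.carrier
  zero_mem' := S.zero_mem
  add_mem' := S.add_mem
  neg_mem' := S.neg_mem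

/-- The multiplicative subgroup underlying a subbrace. -/
def Subbrace.subgroup (S : Subbrace B) : Subgroup B where
  carrier := S.carrier
  one_mem' := by rw [one_eq_zero]; exact S.zero_mem
  mul_mem' := S.mul_mem
  inv_mem' := S.inv_mem

/-- Given ideals `J ≤ I` of `B`, `MemSocQuotRel I J x` says that the coset of `x`
lies in `Soc(I/J) = Ker(λ) ∩ Z(I/J, +)` (for `I = B` take `I = Set.univ`). -/
def MemSocQuotRel (I J : Set B) (x : B) : Prop :=
  x ∈ I ∧ (∀ y ∈ I, -y + lam x y ∈ J) ∧ ∀ y ∈ I, -(y + x) + (x + y) ∈ J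

/-- Given ideals `J ≤ I` of `B`, `MemZetaQuotRel I J x` says that the coset of `x`
lies in `ζ(I/J) = Soc(I/J) ∩ Z(I/J, ·)`. -/
def MemZetaQuotRel (I J : Set B) (x : B) : Prop :=
  MemSocQuotRel I J x ∧ ∀ y ∈ I, (y * x)⁻¹ * (x * y) ∈ J

/-- The coset of `x` lies in `Soc(B/J)`. -/
def MemSocQuot (J : Set B) (x : B) : Prop := MemSocQuotRel Set.univ J x

/-- The coset of `x` lies in `ζ(B/J)`. -/
def MemZetaQuot (J : Set B) (x : B) : Prop := MemZetaQuotRel Set.univ J x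

/-- For ideals `I ≤ J`, the additive group of the quotient `J/I` is infinite cyclic. -/
def QuotAddInfCyclic (I J : Set B) : Prop :=
  ∃ x ∈ J, (∀ y ∈ J, ∃ n : ℤ, -(n • x) + y ∈ I) ∧ ∀ n : ℤ, n • x ∈ I → n = 0

/-- For ideals `I ≤ J`, the quotient `J/I` has prime order `p`. -/
def QuotPrimeOrder (I J : Set B) (p : ℕ) : Prop :=
  p.Prime ∧ ∃ x ∈ J, x ∉ I ∧ p • x ∈ I ∧ ∀ y ∈ J, ∃ n : ℤ, -(n • x) + y ∈ I

/-- A brace is supersoluble if it has a finite chain of ideals each factor of which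
either is additively infinite cyclic and contained in the socle of the corresponding
quotient, or has prime order. -/
def IsSupersoluble (B : Type*) [SkewBrace B] : Prop :=
  ∃ (n : ℕ) (I : ℕ → BraceIdeal B),
    (I 0).carrier = {0} ∧ (I n).carrier = Set.univ ∧
    (∀ i, i < n → (I i).carrier ⊆ (I (i + 1)).carrier) ∧
    ∀ i, i < n →
      (QuotAddInfCyclic (I i).carrier (I (i + 1)).carrier ∧
        ∀ x ∈ (I (i + 1)).carrier, MemSocQuot (I i).carrier x) ∨
      ∃ p : ℕ, QuotPrimeOrder (I i).carrier (I (i + 1)).carrier p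

/-- The upper socle series of the brace (carrier of the ideal) `I`. -/
def socChainRel (I : Set B) : ℕ → Set B
  | 0 => {0}
  | n + 1 => {x | MemSocQuotRel I (socChainRel I n) x}

/-- The upper central series of the brace (carrier of the ideal) `I`. -/
def zetaChainRel (I : Set B) : ℕ → Set B
  | 0 => {0}
  | n + 1 => {x | MemZetaQuotRel I (zetaChainRel I n) x}

/-- The upper socle series `Soc_n(B)` of `B`. -/
def socChain (B : Type*) [SkewBrace B] : ℕ → Set B := socChainRel Set.univ

/-- The upper central series `ζ_n(B)` of `B`. -/
def zetaChain (B : Type*) [SkewBrace B] : ℕ → Set B := zetaChainRel Set.univ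

/-- A brace is centrally nilpotent if its upper central series reaches `B`. -/
def IsCentrallyNilpotent (B : Type*) [SkewBrace B] : Prop :=
  ∃ m : ℕ, zetaChain B m = Set.univ

end SkewBrace


open Subgroup

namespace SkewBrace

variable {B : Type*} [SkewBrace B]

lemma zero_mul' (x : B) : (0 : B) * x = x := by rw [← one_eq_zero, one_mul]

lemma mul_zero' (x : B) : x * (0 : B) = x := by rw [← one_eq_zero, mul_one]

lemma lam_add' (a b c : B) : lam a (b + c) = lam a b + lam a c := by
  unfold lam
  rw [skew_distrib]
  simp only [add_assoc]

lemma lam_zero_right (a : B) : lam a (0 : B) = 0 := by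
  unfold lam; rw [mul_zero', neg_add_cancel]

lemma lam_zero_left (x : B) : lam (0 : B) x = x := by
  unfold lam; rw [zero_mul', neg_zero, zero_add]

lemma mul_neg' (a b : B) : a * (-b) = a + -(a * b) + a := by
  have h := skew_distrib a (-b) b
  rw [neg_add_cancel, mul_zero'] at h
  -- h : a = a * -b + -a + a * b
  have h2 : a + -(a*b) + a = a * -b + -a + a * b + -(a*b) + a := by rw [← h]
  rw [h2]
  simp only [add_assoc, add_neg_cancel_left, neg_add_cancel_left, neg_add_cancel, add_zero]

lemma lam_lam (a b c : B) : lam a (lam b c) = lam (a * b) c := by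
  unfold lam
  rw [skew_distrib, mul_neg', mul_assoc]
  simp only [add_assoc, add_neg_cancel_left, neg_add_cancel_left]

lemma lam_inv_cancel (a : B) (x : B) : lam a⁻¹ (lam a x) = x := by
  rw [lam_lam, inv_mul_cancel, one_eq_zero, lam_zero_left]

lemma lam_cancel_inv (a : B) (x : B) : lam a (lam a⁻¹ x) = x := by
  rw [lam_lam, mul_inv_cancel, one_eq_zero, lam_zero_left]

/-- `lam a` as an additive automorphism of `B`. -/
def lamEquiv (a : B) : B ≃+ B where
  toFun := lam a
  invFun := lam a⁻¹
  left_inv := lam_inv_cancel a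
  right_inv := lam_cancel_inv a
  map_add' := lam_add' a

@[simp] lemma lamEquiv_apply (a x : B) : lamEquiv a x = lam a x := rfl
@[simp] lemma lamEquiv_symm_apply (a x : B) : (lamEquiv a).symm x = lam a⁻¹ x := rfl

/-- additive conjugation as an additive automorphism. -/
def addConjEquiv (b : B) : B ≃+ B where
  toFun := fun x => b + x + -b
  invFun := fun x => -b + x + b
  left_inv := fun x => by
    simp only [add_assoc, neg_add_cancel_left, neg_add_cancel, add_zero]
  right_inv := fun x => by
    simp only [add_assoc, add_neg_cancel_left, add_neg_cancel, add_zero]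
  map_add' := fun x y => by simp only [add_assoc, neg_add_cancel_left]

@[simp] lemma addConjEquiv_apply (b x : B) : addConjEquiv b x = b + x + -b := rfl
@[simp] lemma addConjEquiv_symm_apply (b x : B) : (addConjEquiv b).symm x = -b + x + b := rfl

lemma mul_eq_add_lam (a b : B) : a * b = a + lam a b := by
  unfold lam; rw [← add_assoc, add_neg_cancel, zero_add]

lemma inv_eq_neg_lam (a : B) : a⁻¹ = -(lam a⁻¹ a) := by
  unfold lam
  rw [inv_mul_cancel, one_eq_zero, add_zero, neg_neg]

end SkewBrace


section GroupLemma

variable {G : Type*} [Group G] [Finite G]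

lemma norm_le_cent {q : ℕ} [Fact q.Prime] (P : Sylow q G) (hq : Nat.card (P : Subgroup G) = q)
    (hmin : ∀ r : ℕ, r.Prime → r ∣ Nat.card G → q ≤ r) :
    Subgroup.normalizer ((P : Subgroup G) : Set G) ≤ Subgroup.centralizer ((P : Subgroup G) : Set G) := by
  have hqp : q.Prime := Fact.out
  have hcyc : IsCyclic (P : Subgroup G) := isCyclic_of_prime_card hq
  have hAut : Nat.card (MulAut (P : Subgroup G)) = q - 1 := by
    rw [IsCyclic.card_mulAut, hq, Nat.totient_prime hqp]
  have hcop : Nat.Coprime (q - 1) (Nat.card G) := by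
    by_contra hc
    have hr : (Nat.gcd (q-1) (Nat.card G)).minFac.Prime := Nat.minFac_prime hc
    have hr1 : (Nat.gcd (q-1) (Nat.card G)).minFac ∣ q - 1 :=
      (Nat.minFac_dvd _).trans (Nat.gcd_dvd_left _ _)
    have hr2 : (Nat.gcd (q-1) (Nat.card G)).minFac ∣ Nat.card G :=
      (Nat.minFac_dvd _).trans (Nat.gcd_dvd_right _ _)
    have h3 := hmin _ hr hr2
    have h5 := hqp.two_le
    have h4 : (Nat.gcd (q-1) (Nat.card G)).minFac ≤ q - 1 :=
      Nat.le_of_dvd (by have := hqp.two_le; omega) hr1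
    omega
  intro g hg
  have hker : (⟨g, hg⟩ : Subgroup.normalizer ((P : Subgroup G) : Set G)) ∈ (P : Subgroup G).normalizerMonoidHom.ker := by
    rw [MonoidHom.mem_ker, ← orderOf_eq_one_iff]
    have h1 : orderOf ((P : Subgroup G).normalizerMonoidHom ⟨g, hg⟩) ∣ q - 1 :=
      hAut ▸ orderOf_dvd_natCard _
    have h2 : orderOf ((P : Subgroup G).normalizerMonoidHom ⟨g, hg⟩) ∣ Nat.card G :=
      dvd_trans (orderOf_map_dvd _ _) (dvd_trans (orderOf_dvd_natCard _)
        (Subgroup.card_subgroup_dvd_card _))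
    exact Nat.eq_one_of_dvd_coprimes hcop h1 h2
  rw [Subgroup.normalizerMonoidHom_ker] at hker
  exact hker

end GroupLemma

section Main
universe u

/-- helper: card of a Sylow subgroup for squarefree groups is the prime itself -/
lemma sylow_card_of_squarefree {G : Type u} [Group G] [Finite G] {q : ℕ} [Fact q.Prime]
    (P : Sylow q G) (hsq : Squarefree (Nat.card G)) (hdvd : q ∣ Nat.card G) :
    Nat.card (P : Subgroup G) = q := by
  have hq : q.Prime := Fact.out
  have h1 : (Nat.card G).factorization q ≤ 1 := Squarefree.natFactorization_le_one _ hsq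
  have h2 : 0 < (Nat.card G).factorization q :=
    hq.factorization_pos_of_dvd (Nat.card_pos (α := G)).ne' hdvd
  rw [Sylow.card_eq_multiplicity]
  have : (Nat.card G).factorization q = 1 := le_antisymm h1 h2
  rw [this, pow_one]

lemma exists_unique_card_maxPrime :
    ∀ (n : ℕ) (G : Type u) [Group G] [Finite G], Nat.card G = n → Squarefree n →
    ∀ p : ℕ, p.Prime → p ∣ n → (∀ r : ℕ, r.Prime → r ∣ n → r ≤ p) →
    ∃! H : Subgroup G, Nat.card H = p := by
  intro n
  induction n using Nat.strong_induction_on with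
  | _ n ih =>
  intro G _ _ hcard hsq p hp hdvd hmax
  have hn0 : n ≠ 0 := hsq.ne_zero
  by_cases hnp : n = p
  · -- base case : G has order p
    refine ⟨⊤, ?_, ?_⟩
    · rw [← hnp, ← hcard]
      exact Nat.card_congr Subgroup.topEquiv.toEquiv
    · intro H hH
      exact Subgroup.eq_top_of_card_eq H (by rw [hH, hcard, hnp])
  · -- inductive step : q := minimal prime, Burnside complement
    set q : ℕ := n.minFac with hqdef
    have hn1 : n ≠ 1 := by rintro rfl; exact absurd (Nat.eq_one_of_dvd_one hdvd) hp.one_lt.ne'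
    have hq : q.Prime := Nat.minFac_prime hn1
    have hqdvd : q ∣ n := Nat.minFac_dvd n
    have hqp : q ≤ p := hmax q hq hqdvd
    have hqnep : q ≠ p := by
      intro hqe
      apply hnp
      have hall : ∀ {d : ℕ}, d.Prime → d ∣ n → d = p := by
        intro d hd hdn
        exact le_antisymm (hmax d hd hdn) (hqe ▸ Nat.minFac_le_of_dvd hd.two_le hdn)
      obtain hpow := Nat.eq_prime_pow_of_unique_prime_dvd hn0 hall
      have hk : n.primeFactorsList.length ≤ 1 := by
        by_contra hk
        push_neg at hk
        have hdd : p * p ∣ n := by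
          rw [hpow, ← pow_two]
          exact pow_dvd_pow p hk
        exact hp.one_lt.ne' (Nat.isUnit_iff.mp (hsq p hdd))
      interval_cases h : n.primeFactorsList.length
      · rw [hpow, pow_zero] at hn1; exact absurd rfl hn1
      · rw [hpow, pow_one]
    have hqltp : q < p := lt_of_le_of_ne hqp hqnep
    have : Fact q.Prime := ⟨hq⟩
    obtain P : Sylow q G := default
    have hPcard : Nat.card (P : Subgroup G) = q :=
      sylow_card_of_squarefree P (hcard ▸ hsq) (hcard ▸ hqdvd)
    have hmin : ∀ r : ℕ, r.Prime → r ∣ Nat.card G → q ≤ r := by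
      intro r hr hrd
      exact Nat.minFac_le_of_dvd hr.two_le (hcard ▸ hrd)
    have hNC := norm_le_cent P hPcard hmin
    have hcompl := MonoidHom.ker_transferSylow_isComplement' P hNC
    set N : Subgroup G := (MonoidHom.transferSylow P hNC).ker with hNdef
    have hNnormal : N.Normal := MonoidHom.normal_ker _
    have hNcard : Nat.card N * q = n := by
      rw [← hPcard, hcompl.card_mul, hcard]
    have hNlt : Nat.card N < n := by
      have h2 := hq.two_le
      have : 0 < Nat.card N := Nat.card_pos
      nlinarith [hNcard]
    have hNdvd : Nat.card N ∣ n := ⟨q, hNcard.symm⟩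
    have hNsq : Squarefree (Nat.card N) := hsq.squarefree_of_dvd ⟨q, hNcard.symm⟩
    have hpN : p ∣ Nat.card N := by
      have : p ∣ Nat.card N * q := hNcard.symm ▸ hdvd
      rcases (Nat.Prime.dvd_mul hp).mp this with h | h
      · exact h
      · exact absurd (((Nat.prime_dvd_prime_iff_eq hp hq).mp h).symm) hqnep
    have hmaxN : ∀ r : ℕ, r.Prime → r ∣ Nat.card N → r ≤ p := by
      intro r hr hrd
      exact hmax r hr (hrd.trans ⟨q, hNcard.symm⟩)
    obtain ⟨H', hH'card, hH'uniq⟩ :=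
      ih (Nat.card N) hNlt (↥N) rfl hNsq p hp hpN hmaxN
    set P0 : Subgroup G := H'.map N.subtype with hP0def
    have hP0card : Nat.card P0 = p := by
      rw [← hH'card]
      exact (Nat.card_congr (Subgroup.equivMapOfInjective H' N.subtype
        N.subtype_injective).toEquiv).symm
    have hP0N : P0 ≤ N := Subgroup.map_subtype_le H'
    -- P0 is the unique subgroup of card p inside N (as subgroup of G)
    have huniqN : ∀ X : Subgroup G, X ≤ N → Nat.card X = p → X = P0 := by
      intro X hXN hXcard
      have h1 : Nat.card (X.subgroupOf N) = p := by
        rw [← hXcard]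
        exact Nat.card_congr (Subgroup.subgroupOfEquivOfLe hXN).toEquiv
      have h2 := hH'uniq _ h1
      have h3 : Nat.card (P0.subgroupOf N) = p := by
        rw [← hP0card]
        exact Nat.card_congr (Subgroup.subgroupOfEquivOfLe hP0N).toEquiv
      have h4 := hH'uniq _ h3
      calc X = Subgroup.map N.subtype (X.subgroupOf N) := by
                rw [Subgroup.subgroupOf_map_subtype, inf_eq_left.mpr hXN]
        _ = Subgroup.map N.subtype (P0.subgroupOf N) := by rw [h2, h4]
        _ = P0 := by rw [Subgroup.subgroupOf_map_subtype, inf_eq_left.mpr hP0N]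
    have hP0normal : P0.Normal := by
      constructor
      intro x hx g
      have hmap : Subgroup.map (MulAut.conj g).toMonoidHom P0 = P0 := by
        apply huniqN
        · intro y hy
          obtain ⟨z, hz, rfl⟩ := hy
          exact hNnormal.conj_mem z (hP0N hz) g
        · rw [← hP0card]
          exact (Nat.card_congr (Subgroup.equivMapOfInjective P0 _
            (MulAut.conj g).injective).toEquiv).symm
      rw [← hmap]
      exact ⟨x, hx, rfl⟩
    refine ⟨P0, hP0card, ?_⟩
    -- uniqueness in G via Sylow conjugacy
    intro H hHcard
    have : Fact p.Prime := ⟨hp⟩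
    have hHp : IsPGroup p H := IsPGroup.of_card (by rw [hHcard, pow_one])
    have hP0p : IsPGroup p (P0 : Subgroup G) := IsPGroup.of_card (by rw [hP0card, pow_one])
    obtain ⟨Q, hQ⟩ := hHp.exists_le_sylow
    obtain ⟨Q', hQ'⟩ := hP0p.exists_le_sylow
    have hQcard : Nat.card (Q : Subgroup G) = p :=
      sylow_card_of_squarefree Q (hcard ▸ hsq) (hcard ▸ hdvd)
    have hQ'card : Nat.card (Q' : Subgroup G) = p :=
      sylow_card_of_squarefree Q' (hcard ▸ hsq) (hcard ▸ hdvd)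
    have hHQ : H = (Q : Subgroup G) := by
      apply SetLike.coe_injective
      refine (Set.eq_of_subset_of_ncard_le hQ ?_ (Set.toFinite _))
      rw [← Nat.card_coe_set_eq, ← Nat.card_coe_set_eq]
      show Nat.card (Q : Subgroup G) ≤ Nat.card H
      rw [hQcard, hHcard]
    have hPQ' : P0 = (Q' : Subgroup G) := by
      apply SetLike.coe_injective
      refine (Set.eq_of_subset_of_ncard_le hQ' ?_ (Set.toFinite _))
      rw [← Nat.card_coe_set_eq, ← Nat.card_coe_set_eq]
      show Nat.card (Q' : Subgroup G) ≤ Nat.card P0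
      rw [hQ'card, hP0card]
    obtain ⟨g, hg⟩ := MulAction.exists_smul_eq G Q' Q
    have : ((g • Q' : Sylow p G) : Subgroup G) = Subgroup.map (MulAut.conj g).toMonoidHom Q' := rfl
    rw [hHQ, ← hg, this, ← hPQ']
    ext x
    simp only [Subgroup.mem_map, MulEquiv.coe_toMonoidHom, MulAut.conj_apply]
    constructor
    · rintro ⟨y, hy, rfl⟩
      exact hP0normal.conj_mem y hy g
    · intro hx
      exact ⟨g⁻¹ * x * g, by simpa using hP0normal.conj_mem x hx g⁻¹, by group⟩

end Main


section Helpers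

universe u

lemma exists_unique_addSubgroup_card {Q : Type u} [AddGroup Q] [Finite Q]
    (hsq : Squarefree (Nat.card Q)) {p : ℕ} (hp : p.Prime) (hdvd : p ∣ Nat.card Q)
    (hmax : ∀ r : ℕ, r.Prime → r ∣ Nat.card Q → r ≤ p) :
    ∃! S : AddSubgroup Q, Nat.card S = p := by
  have hmc : Nat.card (Multiplicative Q) = Nat.card Q := rfl
  have hcardeq : ∀ S' : AddSubgroup Q, Nat.card (AddSubgroup.toSubgroup S') = Nat.card S' :=
    fun S' => Nat.card_congr ⟨fun x => ⟨x.1, x.2⟩, fun x => ⟨x.1, x.2⟩,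
      fun _ => rfl, fun _ => rfl⟩
  obtain ⟨Sm, hSm, hSmu⟩ := exists_unique_card_maxPrime (Nat.card Q) (Multiplicative Q)
    hmc hsq p hp hdvd hmax
  refine ⟨AddSubgroup.toSubgroup.symm Sm, ?_, ?_⟩
  · show Nat.card (AddSubgroup.toSubgroup.symm Sm : AddSubgroup Q) = p
    rw [← hcardeq, OrderIso.apply_symm_apply]
    exact hSm
  · intro S' hS'
    have := hSmu (AddSubgroup.toSubgroup S')
      (by show Nat.card (AddSubgroup.toSubgroup S' : Subgroup (Multiplicative Q)) = p
          rw [hcardeq]; exact hS')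
    calc S' = AddSubgroup.toSubgroup.symm (AddSubgroup.toSubgroup S') :=
          (OrderIso.symm_apply_apply _ _).symm
      _ = AddSubgroup.toSubgroup.symm Sm := by rw [this]

@[to_additive card_addMap_quot_mul]
lemma card_map_quot_mul {G : Type u} [Group G] [Finite G] (N H : Subgroup G) [N.Normal]
    (h : N ≤ H) :
    Nat.card (H.map (QuotientGroup.mk' N)) * Nat.card N = Nat.card H := by
  have hrange : ((QuotientGroup.mk' N).comp H.subtype).range = H.map (QuotientGroup.mk' N) := by
    rw [MonoidHom.range_comp, Subgroup.range_subtype]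
  have hker : ((QuotientGroup.mk' N).comp H.subtype).ker = N.subgroupOf H := by
    ext x
    simp [MonoidHom.mem_ker, QuotientGroup.eq_one_iff, Subgroup.mem_subgroupOf]
  have h1 := Subgroup.card_eq_card_quotient_mul_card_subgroup
    ((QuotientGroup.mk' N).comp H.subtype).ker
  have h2 : Nat.card (↥H ⧸ ((QuotientGroup.mk' N).comp H.subtype).ker) =
      Nat.card ((QuotientGroup.mk' N).comp H.subtype).range :=
    Nat.card_congr (QuotientGroup.quotientKerEquivRange _).toEquiv
  have h3 : Nat.card ((QuotientGroup.mk' N).comp H.subtype).ker = Nat.card N := by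
    rw [hker]
    exact Nat.card_congr (Subgroup.subgroupOfEquivOfLe h).toEquiv
  rw [h2, h3, hrange] at h1
  exact h1.symm

lemma mem_of_equiv_quot {G : Type u} [Group G] [Finite G] (N : Subgroup G) [N.Normal]
    (e : G ≃* G) (he : Subgroup.map (e : G →* G) N = N) (T : Subgroup (G ⧸ N))
    (hu : ∀ T' : Subgroup (G ⧸ N), Nat.card T' = Nat.card T → T' = T)
    (x : G) (hx : (x : G ⧸ N) ∈ T) : ((e x : G) : G ⧸ N) ∈ T := by
  have hcard : Nat.card (T.map ((QuotientGroup.congr N N e he : G ⧸ N ≃* G ⧸ N) :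
      G ⧸ N →* G ⧸ N)) = Nat.card T :=
    (Nat.card_congr (Subgroup.equivMapOfInjective T _
      (QuotientGroup.congr N N e he).injective).toEquiv).symm
  have hTT := hu _ hcard
  rw [← hTT]
  exact ⟨x, hx, QuotientGroup.congr_mk N N e he x⟩

lemma mem_of_addEquiv_quot {G : Type u} [AddGroup G] [Finite G] (N : AddSubgroup G) [N.Normal]
    (e : G ≃+ G) (he : AddSubgroup.map (e : G →+ G) N = N) (T : AddSubgroup (G ⧸ N))
    (hu : ∀ T' : AddSubgroup (G ⧸ N), Nat.card T' = Nat.card T → T' = T)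
    (x : G) (hx : (x : G ⧸ N) ∈ T) : ((e x : G) : G ⧸ N) ∈ T := by
  have hcard : Nat.card (T.map ((QuotientAddGroup.congr N N e he : G ⧸ N ≃+ G ⧸ N) :
      G ⧸ N →+ G ⧸ N)) = Nat.card T :=
    (Nat.card_congr (AddSubgroup.equivMapOfInjective T _
      (QuotientAddGroup.congr N N e he).injective).toEquiv).symm
  have hTT := hu _ hcard
  rw [← hTT]
  exact ⟨x, hx, rfl⟩

end Helpers


namespace SkewBrace

variable {B : Type*} [SkewBrace B]

lemma exists_step [Finite B] (hsq : Squarefree (Nat.card B)) (J I : BraceIdeal B)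
    (hle : J.carrier ⊆ I.carrier) (hne : J.carrier ≠ I.carrier) :
    ∃ (K : BraceIdeal B) (p : ℕ), J.carrier ⊆ K.carrier ∧ K.carrier ⊆ I.carrier ∧
      QuotPrimeOrder J.carrier K.carrier p := by
  classical
  set Ia : AddSubgroup B := I.toSubbrace.addSubgroup with hIadef
  set Ja : AddSubgroup ↥Ia := (J.toSubbrace.addSubgroup).addSubgroupOf Ia with hJadef
  have hmemIa : ∀ x : B, x ∈ Ia ↔ x ∈ I.carrier := fun x => Iff.rfl
  have hmemJa : ∀ x : ↥Ia, x ∈ Ja ↔ (x : B) ∈ J.carrier := fun x => AddSubgroup.mem_addSubgroupOf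
  haveI hJaN : Ja.Normal := by
    constructor
    intro n hn g
    rw [hmemJa] at hn ⊢
    simp only [AddSubgroup.coe_add, AddSubgroup.coe_neg]
    exact J.addConj_mem (g : B) hn
  set π : ↥Ia →+ (↥Ia ⧸ Ja) := QuotientAddGroup.mk' Ja with hπdef
  -- cardinalities
  have hlag : Nat.card ↥Ia = Nat.card (↥Ia ⧸ Ja) * Nat.card Ja :=
    AddSubgroup.card_eq_card_quotient_mul_card_addSubgroup Ja
  have hQdvd : Nat.card (↥Ia ⧸ Ja) ∣ Nat.card B :=
    dvd_trans ⟨Nat.card Ja, hlag⟩ (AddSubgroup.card_addSubgroup_dvd_card Ia)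
  have hQsq : Squarefree (Nat.card (↥Ia ⧸ Ja)) := hsq.squarefree_of_dvd hQdvd
  obtain ⟨x0, hx0I, hx0J⟩ : ∃ x, x ∈ I.carrier ∧ x ∉ J.carrier := by
    by_contra h
    push_neg at h
    exact hne (Set.Subset.antisymm hle h)
  haveI : Nontrivial (↥Ia ⧸ Ja) := by
    refine ⟨⟨((⟨x0, hx0I⟩ : ↥Ia) : ↥Ia ⧸ Ja), 0, fun h => hx0J ?_⟩⟩
    have := (QuotientAddGroup.eq_zero_iff (⟨x0, hx0I⟩ : ↥Ia)).mp h
    rwa [hmemJa] at this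
  have h1Q : 1 < Nat.card (↥Ia ⧸ Ja) := Finite.one_lt_card
  have hQ0 : Nat.card (↥Ia ⧸ Ja) ≠ 0 := by positivity
  set p : ℕ := (Nat.card (↥Ia ⧸ Ja)).primeFactors.max'
    (Nat.nonempty_primeFactors.mpr h1Q) with hpdef
  have hp : p.Prime := Nat.prime_of_mem_primeFactors (Finset.max'_mem _ _)
  have hpdvd : p ∣ Nat.card (↥Ia ⧸ Ja) := Nat.dvd_of_mem_primeFactors (Finset.max'_mem _ _)
  have hpmax : ∀ r : ℕ, r.Prime → r ∣ Nat.card (↥Ia ⧸ Ja) → r ≤ p := fun r hr hrd =>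
    Finset.le_max' _ _ (Nat.mem_primeFactors.mpr ⟨hr, hrd, hQ0⟩)
  obtain ⟨S, hScard, hSuniq⟩ := exists_unique_addSubgroup_card hQsq hp hpdvd hpmax
  have hSuniq' : ∀ T' : AddSubgroup (↥Ia ⧸ Ja), Nat.card T' = Nat.card S → T' = S :=
    fun T' h => hSuniq T' (show Nat.card T' = p by rw [h, hScard])
  set K : AddSubgroup B := AddSubgroup.map Ia.subtype (AddSubgroup.comap π S) with hKdef
  have hmemK : ∀ x : B, x ∈ K ↔ ∃ hx : x ∈ I.carrier, ((⟨x, hx⟩ : ↥Ia) : ↥Ia ⧸ Ja) ∈ S := by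
    intro x
    constructor
    · rintro ⟨y, hy, rfl⟩
      exact ⟨y.2, hy⟩
    · rintro ⟨hx, hS⟩
      exact ⟨⟨x, hx⟩, hS, rfl⟩
  have hKI : ∀ x ∈ K, x ∈ I.carrier := by
    intro x hx; rw [hmemK] at hx; exact hx.1
  have hJK : ∀ x ∈ J.carrier, x ∈ K := by
    intro j hj
    rw [hmemK]
    refine ⟨hle hj, ?_⟩
    have : ((⟨j, hle hj⟩ : ↥Ia) : ↥Ia ⧸ Ja) = 0 :=
      (QuotientAddGroup.eq_zero_iff _).mpr ((hmemJa _).mpr hj)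
    rw [this]
    exact S.zero_mem
  -- invariance of K under compatible additive automorphisms
  have hinv : ∀ e : B ≃+ B, (∀ x ∈ I.carrier, e x ∈ I.carrier) →
      (∀ x ∈ I.carrier, e.symm x ∈ I.carrier) →
      (∀ x ∈ J.carrier, e x ∈ J.carrier) → (∀ x ∈ J.carrier, e.symm x ∈ J.carrier) →
      ∀ x ∈ K, e x ∈ K := by
    intro e hI1 hI2 hJ1 hJ2 x hx
    rw [hmemK] at hx ⊢
    obtain ⟨hxI, hxS⟩ := hx
    refine ⟨hI1 x hxI, ?_⟩
    let e' : ↥Ia ≃+ ↥Ia :=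
      { toFun := fun y => ⟨e y, hI1 y y.2⟩
        invFun := fun y => ⟨e.symm y, hI2 y y.2⟩
        left_inv := fun y => by ext; simp
        right_inv := fun y => by ext; simp
        map_add' := fun y z => by ext; simp }
    have he' : AddSubgroup.map (e' : ↥Ia →+ ↥Ia) Ja = Ja := by
      ext y
      simp only [AddSubgroup.mem_map]
      constructor
      · rintro ⟨z, hz, rfl⟩
        rw [hmemJa] at hz
        rw [hmemJa]
        exact hJ1 _ hz
      · intro hy
        rw [hmemJa] at hy
        refine ⟨⟨e.symm y, hI2 _ y.2⟩, ?_, ?_⟩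
        · rw [hmemJa]; exact hJ2 _ hy
        · ext; simp [e']
    exact mem_of_addEquiv_quot Ja e' he' S hSuniq' ⟨x, hxI⟩ hxS
  have hlamK : ∀ (b : B), ∀ x ∈ K, lam b x ∈ K := by
    intro b x hx
    refine hinv (lamEquiv b) (fun y hy => I.lam_mem b hy)
      (fun y hy => by simpa using I.lam_mem b⁻¹ hy)
      (fun y hy => J.lam_mem b hy)
      (fun y hy => by simpa using J.lam_mem b⁻¹ hy) x hx
  have haddConjK : ∀ (b : B), ∀ x ∈ K, b + x + -b ∈ K := by
    intro b x hx
    refine hinv (addConjEquiv b) (fun y hy => I.addConj_mem b hy)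
      (fun y hy => by simpa using I.addConj_mem (-b) hy)
      (fun y hy => J.addConj_mem b hy)
      (fun y hy => by simpa using J.addConj_mem (-b) hy) x hx
  have hmulK : ∀ x ∈ K, ∀ y ∈ K, x * y ∈ K := by
    intro x hx y hy
    rw [mul_eq_add_lam]
    exact K.add_mem hx (hlamK x y hy)
  have hinvK : ∀ x ∈ K, x⁻¹ ∈ K := by
    intro x hx
    rw [inv_eq_neg_lam]
    exact K.neg_mem (hlamK x⁻¹ x hx)
  -- the subbrace on K
  set Ksb : Subbrace B :=
    { carrier := (K : Set B)
      zero_mem := K.zero_mem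
      add_mem := fun ha hb => K.add_mem ha hb
      neg_mem := fun ha => K.neg_mem ha
      mul_mem := fun ha hb => hmulK _ ha _ hb
      inv_mem := fun ha => hinvK _ ha } with hKsbdef
  -- multiplicative side
  have hmulconj : ∀ (b : B), ∀ x ∈ K, b * x * b⁻¹ ∈ K := by
    set Im : Subgroup B := I.toSubbrace.subgroup with hImdef
    set Jm : Subgroup ↥Im := (J.toSubbrace.subgroup).subgroupOf Im with hJmdef
    have hmemJm : ∀ x : ↥Im, x ∈ Jm ↔ (x : B) ∈ J.carrier := fun x => Subgroup.mem_subgroupOf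
    haveI hJmN : Jm.Normal := by
      constructor
      intro n hn g
      rw [hmemJm] at hn ⊢
      simp only [Subgroup.coe_mul, Subgroup.coe_inv]
      exact J.mulConj_mem (g : B) hn
    set Km : Subgroup B := Ksb.subgroup with hKmdef
    have hKmIm : ∀ x ∈ K, x ∈ Im := fun x hx => hKI x hx
    set Km' : Subgroup ↥Im := Km.subgroupOf Im with hKm'def
    have hJmKm' : Jm ≤ Km' := by
      intro j hj
      rw [hmemJm] at hj
      exact Subgroup.mem_subgroupOf.mpr (hJK _ hj)
    set πm : ↥Im →* (↥Im ⧸ Jm) := QuotientGroup.mk' Jm with hπmdef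
    set T : Subgroup (↥Im ⧸ Jm) := Km'.map πm with hTdef
    have hcardJ : Nat.card Ja = Nat.card Jm :=
      Nat.card_congr ⟨fun a => ⟨⟨a.1.1, a.1.2⟩, a.2⟩, fun a => ⟨⟨a.1.1, a.1.2⟩, a.2⟩,
        fun _ => rfl, fun _ => rfl⟩
    have hcardI : Nat.card Ia = Nat.card Im :=
      Nat.card_congr ⟨fun a => ⟨a.1, a.2⟩, fun a => ⟨a.1, a.2⟩, fun _ => rfl, fun _ => rfl⟩
    have hcardK' : Nat.card Km' = Nat.card (AddSubgroup.comap π S) := by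
      have e1 : ↥Km' ≃* ↥Km := Subgroup.subgroupOfEquivOfLe (fun x hx => hKmIm x hx)
      have e2 : ↥(AddSubgroup.comap π S) ≃+ ↥K :=
        AddSubgroup.equivMapOfInjective _ Ia.subtype Ia.subtype_injective
      calc Nat.card Km' = Nat.card Km := Nat.card_congr e1.toEquiv
        _ = Nat.card K := Nat.card_congr
            ⟨fun a => ⟨a.1, a.2⟩, fun a => ⟨a.1, a.2⟩, fun _ => rfl, fun _ => rfl⟩
        _ = Nat.card (AddSubgroup.comap π S) := (Nat.card_congr e2.toEquiv).symm
    have hJaComap : Ja ≤ AddSubgroup.comap π S := by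
      intro j hj
      simp only [AddSubgroup.mem_comap]
      have hj0 : π j = 0 := (QuotientAddGroup.eq_zero_iff j).mpr hj
      rw [hj0]
      exact S.zero_mem
    have hmapComap : (AddSubgroup.comap π S).map (QuotientAddGroup.mk' Ja) = S :=
      AddSubgroup.map_comap_eq_self_of_surjective (QuotientAddGroup.mk'_surjective Ja) S
    have hA := card_addMap_quot_mul Ja (AddSubgroup.comap π S) hJaComap
    rw [hmapComap] at hA
    have hB := card_map_quot_mul Jm Km' hJmKm'
    have hcardT : Nat.card T = p := by
      have h0 : 0 < Nat.card Jm := Nat.card_pos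
      apply Nat.eq_of_mul_eq_mul_right h0
      show Nat.card (Subgroup.map (QuotientGroup.mk' Jm) Km') * Nat.card Jm = p * Nat.card Jm
      rw [hB, hcardK', ← hA, hcardJ, hScard]
    have hcardQm : Nat.card (↥Im ⧸ Jm) = Nat.card (↥Ia ⧸ Ja) := by
      have hlagm : Nat.card ↥Im = Nat.card (↥Im ⧸ Jm) * Nat.card Jm :=
        Subgroup.card_eq_card_quotient_mul_card_subgroup Jm
      have h0 : 0 < Nat.card Jm := Nat.card_pos
      apply Nat.eq_of_mul_eq_mul_right h0
      rw [← hlagm, ← hcardI, hlag, hcardJ]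
    obtain ⟨Sm, hSmcard, hSmuniq⟩ := exists_unique_card_maxPrime
      (Nat.card (↥Im ⧸ Jm)) (↥Im ⧸ Jm) rfl (by rw [hcardQm]; exact hQsq) p hp
      (by rw [hcardQm]; exact hpdvd)
      (fun r hr hrd => hpmax r hr (by rwa [← hcardQm]))
    have hTuniq : ∀ T' : Subgroup (↥Im ⧸ Jm), Nat.card T' = Nat.card T → T' = T := by
      intro T' h
      have h1 := hSmuniq T' (show Nat.card T' = p by rw [h, hcardT])
      have h2 := hSmuniq T (show Nat.card T = p from hcardT)
      rw [h1, h2]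
    have hpre : ∀ y : ↥Im, ((y : ↥Im ⧸ Jm) ∈ T) → (y : B) ∈ K := by
      intro y hy
      obtain ⟨k, hk, hky⟩ := hy
      have hky' : (k : ↥Im ⧸ Jm) = (y : ↥Im ⧸ Jm) := hky
      have hmemJ : k⁻¹ * y ∈ Jm := by rwa [← QuotientGroup.eq]
      have hyk : (y : B) = (k : B) * ((k⁻¹ * y : ↥Im) : B) := by
        simp only [Subgroup.coe_mul, Subgroup.coe_inv, ← mul_assoc, mul_inv_cancel, one_mul]
      rw [hyk]
      exact hmulK _ (Subgroup.mem_subgroupOf.mp hk) _ (hJK _ ((hmemJm _).mp hmemJ))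
    intro b x hx
    let em : ↥Im ≃* ↥Im :=
      { toFun := fun y => ⟨b * y * b⁻¹, I.mulConj_mem b y.2⟩
        invFun := fun y => ⟨b⁻¹ * y * b, by have h := I.mulConj_mem b⁻¹ y.2; rw [inv_inv] at h; exact h⟩
        left_inv := fun y => by ext; simp [mul_assoc]
        right_inv := fun y => by ext; simp [mul_assoc]
        map_mul' := fun y z => by ext; simp }
    have hem : Subgroup.map (em : ↥Im →* ↥Im) Jm = Jm := by
      ext y
      simp only [Subgroup.mem_map]
      constructor
      · rintro ⟨z, hz, rfl⟩
        rw [hmemJm] at hz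
        rw [hmemJm]
        exact J.mulConj_mem b hz
      · intro hy
        rw [hmemJm] at hy
        refine ⟨⟨b⁻¹ * y * b, by have h := I.mulConj_mem b⁻¹ y.2; rw [inv_inv] at h; exact h⟩, ?_, ?_⟩
        · rw [hmemJm]
          simpa using J.mulConj_mem b⁻¹ hy
        · ext; simp [em, mul_assoc]
    have hxT : ((⟨x, hKmIm x hx⟩ : ↥Im) : ↥Im ⧸ Jm) ∈ T :=
      ⟨⟨x, hKmIm x hx⟩, Subgroup.mem_subgroupOf.mpr hx, rfl⟩
    have hres := mem_of_equiv_quot Jm em hem T hTuniq ⟨x, hKmIm x hx⟩ hxT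
    exact hpre _ hres
  set KI : BraceIdeal B :=
    { toSubbrace := Ksb
      addConj_mem := fun b {a} ha => haddConjK b a ha
      mulConj_mem := fun b {a} ha => hmulconj b a ha
      lam_mem := fun b {a} ha => hlamK b a ha } with hKIdef
  refine ⟨KI, p, hJK, hKI, ?_⟩
  refine ⟨hp, ?_⟩
  haveI hSnontriv : Nontrivial ↥S :=
    Finite.one_lt_card_iff_nontrivial.mp (by rw [hScard]; exact hp.one_lt)
  obtain ⟨⟨s, hsS⟩, hs0⟩ := exists_ne (0 : ↥S)
  have hs0' : s ≠ 0 := fun h => hs0 (Subtype.ext h)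
  obtain ⟨xb, hxb⟩ := QuotientAddGroup.mk'_surjective Ja s
  have hxb' : ((xb : ↥Ia) : ↥Ia ⧸ Ja) = s := hxb
  refine ⟨(xb : B), ?_, ?_, ?_, ?_⟩
  · show (xb : B) ∈ K
    rw [hmemK]
    refine ⟨xb.2, ?_⟩
    have : (⟨(xb : B), xb.2⟩ : ↥Ia) = xb := rfl
    rw [this, hxb']
    exact hsS
  · intro hxJ
    apply hs0'
    rw [← hxb']
    exact (QuotientAddGroup.eq_zero_iff xb).mpr ((hmemJa xb).mpr hxJ)
  · have hps : p • s = 0 := by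
      have h1 : (p • (⟨s, hsS⟩ : ↥S)) = 0 := by
        rw [← hScard]
        exact card_nsmul_eq_zero'
      have h2 := congrArg (fun z : ↥S => (z : ↥Ia ⧸ Ja)) h1
      simpa using h2
    have hq : ((p • xb : ↥Ia) : ↥Ia ⧸ Ja) = 0 := by
      have : ((p • xb : ↥Ia) : ↥Ia ⧸ Ja) = p • ((xb : ↥Ia) : ↥Ia ⧸ Ja) := by
        exact map_nsmul π p xb
      rw [this, hxb', hps]
    have hmem := (hmemJa _).mp ((QuotientAddGroup.eq_zero_iff _).mp hq)
    have hcoe : ((p • xb : ↥Ia) : B) = p • (xb : B) := by push_cast; rfl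
    rwa [hcoe] at hmem
  · intro y hy
    have hy' : y ∈ K := hy
    rw [hmemK] at hy'
    obtain ⟨hyI, hyS⟩ := hy'
    have hzm : AddSubgroup.zmultiples (⟨s, hsS⟩ : ↥S) = ⊤ := by
      apply AddSubgroup.eq_top_of_card_eq
      have hdvd' : Nat.card (AddSubgroup.zmultiples (⟨s, hsS⟩ : ↥S)) ∣ p := by
        rw [← hScard]
        exact AddSubgroup.card_addSubgroup_dvd_card _
      rcases (Nat.Prime.eq_one_or_self_of_dvd hp _ hdvd') with h1 | h1
      · exfalso
        have hbot := AddSubgroup.card_eq_one.mp h1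
        have : (⟨s, hsS⟩ : ↥S) ∈ AddSubgroup.zmultiples (⟨s, hsS⟩ : ↥S) :=
          AddSubgroup.mem_zmultiples_iff.mpr ⟨1, one_zsmul _⟩
        rw [hbot] at this
        exact hs0 (AddSubgroup.mem_bot.mp this)
      · rw [h1, hScard]
    obtain ⟨n, hn⟩ : ∃ n : ℤ, n • (⟨s, hsS⟩ : ↥S) =
        ⟨((⟨y, hyI⟩ : ↥Ia) : ↥Ia ⧸ Ja), hyS⟩ := by
      have : (⟨((⟨y, hyI⟩ : ↥Ia) : ↥Ia ⧸ Ja), hyS⟩ : ↥S) ∈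
          AddSubgroup.zmultiples (⟨s, hsS⟩ : ↥S) := by
        rw [hzm]; trivial
      exact AddSubgroup.mem_zmultiples_iff.mp this
    refine ⟨n, ?_⟩
    have hn' : n • s = ((⟨y, hyI⟩ : ↥Ia) : ↥Ia ⧸ Ja) := by
      have := congrArg (fun z : ↥S => (z : ↥Ia ⧸ Ja)) hn
      simpa using this
    have key : ((-(n • xb) + ⟨y, hyI⟩ : ↥Ia) : ↥Ia ⧸ Ja) = 0 := by
      have h1 : ((-(n • xb) + ⟨y, hyI⟩ : ↥Ia) : ↥Ia ⧸ Ja)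
          = -(n • ((xb : ↥Ia) : ↥Ia ⧸ Ja)) + ((⟨y, hyI⟩ : ↥Ia) : ↥Ia ⧸ Ja) := by
        show π _ = -(n • π xb) + π _
        rw [map_add, map_neg, map_zsmul]
      rw [h1, hxb', ← hn', neg_add_cancel]
    have hmem := (hmemJa _).mp ((QuotientAddGroup.eq_zero_iff _).mp key)
    have hcoe : ((-(n • xb) + (⟨y, hyI⟩ : ↥Ia) : ↥Ia) : B) = -(n • (xb : B)) + y := by
      push_cast
      rfl
    rwa [hcoe] at hmem

/-- The trivial ideal `{0}`. -/
def botIdeal (B : Type*) [SkewBrace B] : BraceIdeal B where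
  carrier := {0}
  zero_mem := Set.mem_singleton 0
  add_mem := by
    intro a b ha hb
    simp only [Set.mem_singleton_iff] at *; rw [ha, hb, add_zero]
  neg_mem := by
    intro a ha
    simp only [Set.mem_singleton_iff] at *; rw [ha, neg_zero]
  mul_mem := by
    intro a b ha hb
    simp only [Set.mem_singleton_iff] at *; rw [ha, hb, mul_zero']
  inv_mem := by
    intro a ha
    simp only [Set.mem_singleton_iff] at *
    rw [ha, ← one_eq_zero, inv_one]
  addConj_mem := by
    intro b a ha
    simp only [Set.mem_singleton_iff] at *; rw [ha, add_zero, add_neg_cancel]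
  mulConj_mem := by
    intro b a ha
    simp only [Set.mem_singleton_iff] at *
    rw [ha, ← one_eq_zero, mul_one, mul_inv_cancel]
  lam_mem := by
    intro b a ha
    simp only [Set.mem_singleton_iff] at *; rw [ha, lam_zero_right]

/-- The total ideal. -/
def topIdeal (B : Type*) [SkewBrace B] : BraceIdeal B where
  carrier := Set.univ
  zero_mem := trivial
  add_mem := by intros; trivial
  neg_mem := by intros; trivial
  mul_mem := by intros; trivial
  inv_mem := by intros; trivial
  addConj_mem := by intros; trivial
  mulConj_mem := by intros; trivial
  lam_mem := by intros; trivial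

lemma chain_exists [Finite B] (hsq : Squarefree (Nat.card B)) :
    ∀ (c : ℕ) (J : BraceIdeal B), Nat.card B ≤ Nat.card J.carrier + c →
    ∃ (m : ℕ) (C : ℕ → BraceIdeal B), (C 0).carrier = J.carrier ∧
      (C m).carrier = Set.univ ∧
      (∀ i, i < m → (C i).carrier ⊆ (C (i+1)).carrier) ∧
      (∀ i, i < m → ∃ p : ℕ, QuotPrimeOrder (C i).carrier (C (i+1)).carrier p) := by
  intro c
  induction c with
  | zero =>
    intro J hc
    have huniv : J.carrier = Set.univ := by
      have h1 : (Set.univ : Set B).ncard ≤ J.carrier.ncard := by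
        rw [Set.ncard_univ, ← Nat.card_coe_set_eq]
        omega
      have := Set.eq_of_subset_of_ncard_le (Set.subset_univ J.carrier) h1 (Set.toFinite _)
      exact (by rw [this] : J.carrier = Set.univ)
    exact ⟨0, fun _ => J, rfl, huniv, fun i hi => absurd hi (by omega),
      fun i hi => absurd hi (by omega)⟩
  | succ c ih =>
    intro J hc
    by_cases hJ : J.carrier = Set.univ
    · exact ⟨0, fun _ => J, rfl, hJ, fun i hi => absurd hi (by omega),
        fun i hi => absurd hi (by omega)⟩
    · obtain ⟨K, p, hJK, _, hqpo⟩ := exists_step hsq J (topIdeal B)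
        (fun x _ => trivial) (by simpa [topIdeal] using hJ)
      have hqpo' := hqpo
      obtain ⟨hp', x, hxK, hxJ, -, -⟩ := hqpo'
      have hss : J.carrier ⊂ K.carrier := ⟨hJK, fun hsub => hxJ (hsub hxK)⟩
      have hlt := Set.ncard_lt_ncard hss (Set.toFinite _)
      rw [← Nat.card_coe_set_eq, ← Nat.card_coe_set_eq] at hlt
      obtain ⟨m, C, hC0, hCm, hmono, hfac⟩ := ih K (by omega)
      refine ⟨m + 1, fun i => Nat.casesOn i J (fun j => C j), rfl, hCm, ?_, ?_⟩
      · intro i hi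
        cases i with
        | zero =>
          show J.carrier ⊆ (C 0).carrier
          rw [hC0]
          exact hJK
        | succ j =>
          exact hmono j (by omega)
      · intro i hi
        cases i with
        | zero =>
          refine ⟨p, ?_⟩
          show QuotPrimeOrder J.carrier (C 0).carrier p
          rw [hC0]
          exact hqpo
        | succ j =>
          exact hfac j (by omega)

end SkewBrace


namespace SkewBrace

/-- Every finite brace of square-free order is supersoluble. -/
theorem isSupersoluble_of_squarefree_card (B : Type*) [SkewBrace B] [Finite B]
    (h : Squarefree (Nat.card B)) : IsSupersoluble B := by
  obtain ⟨m, C, hC0, hCm, hmono, hfac⟩ := chain_exists h (Nat.card B) (botIdeal B)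
    (Nat.le_add_left _ _)
  refine ⟨m, C, ?_, hCm, hmono, fun i hi => Or.inr (hfac i hi)⟩
  rw [hC0]
  rfl

end SkewBrace
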